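/- Let x₀(t),…,x_N(t) solve the ODE system ẋᵢ = v(m_N Σ_{k=0}^N U(xᵢ - x_k) - m_N λ(i+1)) with m_N = 1/N, v Lipschitz satisfying v(ρ₂)-v(ρ₁) ≤ -b(ρ₂-ρ₁) for ρ₂ ≥ ρ₁, U Lipschitz, λ > 0, and initial data x₀(0) ≤ x₁(0) ≤ … ≤ x_N(0). Then for all i and all t > 0, x_{i+1}(t) - xᵢ(t) ≥ (bλ m_N/(2 Lip(v) Lip(U)))·(1 - e^{-2 Lip(v) Lip(U) t}); in particular the particles are strictly ordered for t > 0. -/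

import Mathlib

set_option maxHeartbeats 1600000


open scoped BigOperators

/-- Discrete smoothing effect for the particle system
`ẋᵢ = v(m_N ∑ₖ U(xᵢ - xₖ) - m_N λ (i+1))`, `m_N = 1/N`: if the initial data are ordered,
then for all `t > 0`,
`x_{i+1}(t) - xᵢ(t) ≥ (bλ m_N/(2 Lip(v) Lip(U))) (1 - e^{-2 Lip(v) Lip(U) t})`;
in particular the particles are strictly ordered for `t > 0`. -/
theorem stmt_14 (N : ℕ) (hN : 1 ≤ N) (Lv LU lam b : ℝ)
    (hLv : 0 < Lv) (hLU : 0 < LU) (hlam : 0 < lam) (hb : 0 < b)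
    (v U : ℝ → ℝ)
    (hv : ∀ a b' : ℝ, |v a - v b'| ≤ Lv * |a - b'|)
    (hU : ∀ a b' : ℝ, |U a - U b'| ≤ LU * |a - b'|)
    (hvdec : ∀ r₁ r₂ : ℝ, r₁ ≤ r₂ → v r₂ - v r₁ ≤ -b * (r₂ - r₁))
    (x : ℕ → ℝ → ℝ)
    (hode : ∀ i ≤ N, ∀ t : ℝ, 0 ≤ t →
      HasDerivAt (x i)
        (v ((1 / N : ℝ) * ∑ k ∈ Finset.range (N + 1), U (x i t - x k t) -
          (1 / N : ℝ) * lam * (i + 1))) t)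
    (hinit : ∀ i < N, x i 0 ≤ x (i + 1) 0) :
    ∀ i < N, ∀ t : ℝ, 0 < t →
      x (i + 1) t - x i t ≥
        b * lam * (1 / N : ℝ) / (2 * Lv * LU) * (1 - Real.exp (-(2 * Lv * LU) * t)) := by
  intro i hi t ht
  have hNR : (1:ℝ) ≤ (N:ℝ) := by exact_mod_cast hN
  have hNpos : (0:ℝ) < (N:ℝ) := lt_of_lt_of_le one_pos hNR
  set m : ℝ := 1 / (N:ℝ) with hm_def
  have hm : 0 < m := by rw [hm_def]; positivity
  have hm1 : m ≤ 1 := by rw [hm_def, div_le_one hNpos]; exact hNR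
  have hmN : m * (N:ℝ) = 1 := by rw [hm_def]; field_simp
  set K : ℝ := 2 * Lv * LU with hK_def
  have hK : 0 < K := by rw [hK_def]; positivity
  have hbLv : b ≤ Lv := by
    have h1 : v 1 - v 0 ≤ -b := by simpa using hvdec 0 1 zero_le_one
    have h2 : |v 1 - v 0| ≤ Lv := by simpa using hv 1 0
    have h3 := neg_le_abs (v 1 - v 0)
    linarith
  set C : ℝ := b * lam * m / K with hC_def
  have hC : 0 < C := by rw [hC_def]; positivity
  have hCK : C * K = b * lam * m := by rw [hC_def]; field_simp
  set ρ : ℕ → ℝ → ℝ := fun j s =>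
    m * ∑ k ∈ Finset.range (N+1), U (x j s - x k s) - m * lam * (j+1) with hρ_def
  set D : ℝ → ℝ := fun s => v (ρ (i+1) s) - v (ρ i s) with hD_def
  set d : ℝ → ℝ := fun s => x (i+1) s - x i s with hd_def
  clear_value m K C ρ D d
  have hderiv : ∀ s : ℝ, 0 ≤ s → HasDerivAt d (D s) s := by
    intro s hs
    have h1 := hode (i+1) (by omega) s hs
    have h2 := hode i (by omega) s hs
    simp only [hd_def, hD_def, hρ_def]
    exact h1.sub h2
  -- key differential inequality
  have key : ∀ s : ℝ, 0 ≤ s → b * lam * m - K * |d s| ≤ D s := by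
    intro s hs
    set S : ℝ := ∑ k ∈ Finset.range (N+1),
      (U (x (i+1) s - x k s) - U (x i s - x k s)) with hS_def
    have hSbound : |S| ≤ ((N:ℝ)+1) * (LU * |d s|) := by
      calc |S| ≤ ∑ k ∈ Finset.range (N+1), |U (x (i+1) s - x k s) - U (x i s - x k s)| :=
            Finset.abs_sum_le_sum_abs _ _
        _ ≤ ∑ _k ∈ Finset.range (N+1), LU * |d s| := by
            refine Finset.sum_le_sum fun k _ => ?_
            have h := hU (x (i+1) s - x k s) (x i s - x k s)
            have heq : x (i+1) s - x k s - (x i s - x k s) = d s := by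
              simp only [hd_def]; ring
            rwa [heq] at h
        _ = ((N:ℝ)+1) * (LU * |d s|) := by
            rw [Finset.sum_const, Finset.card_range, nsmul_eq_mul]; push_cast; ring
    have hLd : 0 ≤ LU * |d s| := mul_nonneg hLU.le (abs_nonneg _)
    have hmS : |m * S| ≤ 2 * (LU * |d s|) := by
      rw [abs_mul, abs_of_pos hm]
      have h1 : m * |S| ≤ m * (((N:ℝ)+1) * (LU * |d s|)) :=
        mul_le_mul_of_nonneg_left hSbound hm.le
      nlinarith [mul_nonneg (sub_nonneg.mpr hm1) hLd]
    have hΔ : ρ (i+1) s - ρ i s = m * S - m * lam := by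
      simp only [hρ_def, hS_def]
      rw [Finset.sum_sub_distrib]
      push_cast
      ring
    have hDs : D s = v (ρ (i+1) s) - v (ρ i s) := by simp only [hD_def]
    rw [hDs, hK_def]
    rcases le_or_gt (ρ (i+1) s) (ρ i s) with hle | hlt
    · have h1 := hvdec (ρ (i+1) s) (ρ i s) hle
      have h2 : m * S ≤ 2 * (LU * |d s|) := le_trans (le_abs_self _) hmS
      nlinarith [mul_le_mul_of_nonneg_left h2 hb.le,
        mul_nonneg (mul_nonneg (sub_nonneg.mpr hbLv) hLU.le) (abs_nonneg (d s))]
    · have h3 := hv (ρ (i+1) s) (ρ i s)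
      have h4 := neg_abs_le (v (ρ (i+1) s) - v (ρ i s))
      have habs2 : |ρ (i+1) s - ρ i s| = ρ (i+1) s - ρ i s := abs_of_pos (sub_pos.mpr hlt)
      rw [habs2] at h3
      have h2 : m * S ≤ 2 * (LU * |d s|) := le_trans (le_abs_self _) hmS
      nlinarith [mul_nonneg (sub_nonneg.mpr hbLv) (mul_nonneg hlam.le hm.le),
        mul_le_mul_of_nonneg_left h2 hLv.le]
  -- the comparison function
  set g : ℝ → ℝ := fun s => C * (1 - Real.exp (-K * s)) - d s with hg_def
  clear_value g
  have hgderiv : ∀ u : ℝ, 0 ≤ u →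
      HasDerivAt g (C * (K * Real.exp (-K * u)) - D u) u := by
    intro u hu
    have h1 : HasDerivAt (fun s : ℝ => -K * s) (-K) u := by
      simpa using (hasDerivAt_id u).const_mul (-K)
    have hE : HasDerivAt (fun s : ℝ => Real.exp (-K * s)) (Real.exp (-K * u) * (-K)) u := h1.exp
    have h2 : HasDerivAt (fun s : ℝ => C * (1 - Real.exp (-K * s)))
        (C * (0 - Real.exp (-K * u) * (-K))) u :=
      HasDerivAt.const_mul C ((hasDerivAt_const u (1:ℝ)).sub hE)
    have h3 := h2.sub (hderiv u hu)
    simp only [hg_def]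
    exact h3.congr_deriv (by ring)
  have hgcont : ContinuousOn g (Set.Icc 0 t) := fun u hu =>
    ((hgderiv u hu.1).continuousAt).continuousWithinAt
  -- bound on g' where g ≥ 0
  have hgK : ∀ u : ℝ, 0 ≤ u → 0 ≤ g u →
      C * (K * Real.exp (-K * u)) - D u ≤ K * g u := by
    intro u hu hgu
    have he1 : Real.exp (-K * u) ≤ 1 := by
      rw [Real.exp_le_one_iff]
      nlinarith
    have hkey := key u hu
    have hgu' : 0 ≤ C * (1 - Real.exp (-K * u)) - d u := by
      simpa [hg_def] using hgu
    have h1 : |d u| + d u ≤ 2 * (C * (1 - Real.exp (-K * u))) := by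
      rcases abs_cases (d u) with ⟨h, _⟩ | ⟨h, _⟩ <;>
        linarith [mul_nonneg hC.le (sub_nonneg.mpr he1)]
    have h2 := mul_le_mul_of_nonneg_left h1 hK.le
    simp only [hg_def]
    nlinarith [hkey, hCK, h2]
  -- proof by contradiction
  by_contra hcon
  push_neg at hcon
  have hgt : 0 < g t := by simp only [hg_def, hd_def]; linarith
  have hg0 : g 0 ≤ 0 := by
    have := hinit i hi
    simp only [hg_def, hd_def]
    rw [mul_zero, Real.exp_zero]
    linarith
  -- find the last zero of g before t
  set A : Set ℝ := Set.Icc 0 t ∩ g ⁻¹' {0} with hA_def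
  have hAclosed : IsClosed A :=
    hgcont.preimage_isClosed_of_isClosed isClosed_Icc isClosed_singleton
  have hAne : A.Nonempty := by
    obtain ⟨s₀, hs₀mem, hs₀⟩ := intermediate_value_Icc ht.le hgcont ⟨hg0, hgt.le⟩
    exact ⟨s₀, hs₀mem, hs₀⟩
  have hAbdd : BddAbove A := ⟨t, fun u hu => hu.1.2⟩
  set s₀ : ℝ := sSup A with hs₀_def
  have hs₀A : s₀ ∈ A := hAclosed.csSup_mem hAne hAbdd
  have hs₀0 : 0 ≤ s₀ := hs₀A.1.1
  have hgs₀ : g s₀ = 0 := hs₀A.2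
  have hs₀t : s₀ ≤ t := hs₀A.1.2
  have hs₀lt : s₀ < t := lt_of_le_of_ne hs₀t (by intro h; rw [h] at hgs₀; linarith)
  -- g ≥ 0 on [s₀, t]
  have hg_nonneg : ∀ u ∈ Set.Icc s₀ t, 0 ≤ g u := by
    intro u hu
    by_contra hneg
    push_neg at hneg
    have hu0 : 0 ≤ u := le_trans hs₀0 hu.1
    have hcont' : ContinuousOn g (Set.Icc u t) :=
      hgcont.mono (Set.Icc_subset_Icc hu0 le_rfl)
    obtain ⟨s', hs'mem, hs'⟩ := intermediate_value_Icc hu.2 hcont' ⟨hneg.le, hgt.le⟩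
    have hs'A : s' ∈ A := ⟨⟨le_trans hu0 hs'mem.1, hs'mem.2⟩, hs'⟩
    have hle : s' ≤ s₀ := le_csSup hAbdd hs'A
    have : u = s' := le_antisymm hs'mem.1 (le_trans hle hu.1)
    rw [← this] at hs'
    linarith
  -- the function e^{-Ku} g u is antitone on [s₀, t]
  set φ : ℝ → ℝ := fun u => Real.exp (-K * u) * g u with hφ_def
  clear_value φ
  have hφderiv : ∀ u : ℝ, 0 ≤ u →
      HasDerivAt φ (Real.exp (-K * u) * (-K) * g u +
        Real.exp (-K * u) * (C * (K * Real.exp (-K * u)) - D u)) u := by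
    intro u hu
    have h1 : HasDerivAt (fun s : ℝ => -K * s) (-K) u := by
      simpa using (hasDerivAt_id u).const_mul (-K)
    rw [hφ_def]
    exact (h1.exp).mul (hgderiv u hu)
  have hanti : AntitoneOn φ (Set.Icc s₀ t) := by
    apply antitoneOn_of_deriv_nonpos (convex_Icc s₀ t)
    · intro u hu
      exact ((hφderiv u (le_trans hs₀0 hu.1)).continuousAt).continuousWithinAt
    · intro u hu
      rw [interior_Icc] at hu
      exact ((hφderiv u (le_trans hs₀0 hu.1.le)).differentiableAt).differentiableWithinAt
    · intro u hu
      rw [interior_Icc] at hu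
      have hu0 : 0 ≤ u := le_trans hs₀0 hu.1.le
      rw [(hφderiv u hu0).deriv]
      have hgu : 0 ≤ g u := hg_nonneg u ⟨hu.1.le, hu.2.le⟩
      have hb1 := hgK u hu0 hgu
      have hexp : 0 < Real.exp (-K * u) := Real.exp_pos _
      nlinarith [mul_le_mul_of_nonneg_left hb1 hexp.le]
  have hfinal : φ t ≤ φ s₀ :=
    hanti ⟨le_rfl, hs₀t⟩ ⟨hs₀t, le_rfl⟩ hs₀t
  have hφs₀ : φ s₀ = 0 := by simp only [hφ_def]; rw [hgs₀, mul_zero]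
  have hφt : 0 < φ t := by
    simp only [hφ_def]
    exact mul_pos (Real.exp_pos _) hgt
  linarith
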